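/- Let X be a nonnegative càdlàg process on [0,T] and let X*_T := sup_{0≤s≤T} X_s. Then for every β ∈ (0,1), E[(X*_T)^β] ≤ (1/(1-β)) · (sup_{τ} E[X_τ])^β, where the supremum is taken over all stopping times τ with values in [0,T]. -/

import Mathlib

open MeasureTheory Filter Set
open scoped ENNReal

lemma grid_mem_Icc {T : ℝ} (hT : 0 < T) (n k : ℕ) (hk : k ≤ 2 ^ n) :
    (k : ℝ) * T / 2 ^ n ∈ Icc (0 : ℝ) T := by
  constructor
  · positivity
  · rw [div_le_iff₀ (by positivity)]
    have : (k : ℝ) ≤ 2 ^ n := by exact_mod_cast hk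
    nlinarith

lemma grid_bound {T : ℝ} (hT : 0 < T) (Y : ℝ → ℝ)
    (hrc : ∀ t, ContinuousWithinAt Y (Ici t) t)
    {b : ℝ} (hb : ∀ n k : ℕ, k ≤ 2 ^ n → Y ((k : ℝ) * T / 2 ^ n) ≤ b) :
    ∀ s ∈ Icc (0 : ℝ) T, Y s ≤ b := by
  intro s hs
  rcases eq_or_lt_of_le hs.2 with hsT | hsT
  · have h1 := hb 0 1 (by norm_num)
    norm_num at h1
    simpa [hsT] using h1
  · set u : ℕ → ℝ := fun m => (⌈s * 2 ^ m / T⌉₊ : ℝ) * T / 2 ^ m with hu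
    have hx : ∀ m : ℕ, (0:ℝ) ≤ s * 2 ^ m / T := fun m => by
      have := hs.1; positivity
    have hsu : ∀ m, s ≤ u m := by
      intro m
      have h1 : s * 2 ^ m / T ≤ (⌈s * 2 ^ m / T⌉₊ : ℝ) := Nat.le_ceil _
      have h2 : s = (s * 2 ^ m / T) * (T / 2 ^ m) := by field_simp
      rw [h2, hu]
      have h3 : (0:ℝ) ≤ T / 2 ^ m := by positivity
      calc s * 2 ^ m / T * (T / 2 ^ m) ≤ (⌈s * 2 ^ m / T⌉₊ : ℝ) * (T / 2 ^ m) :=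
            mul_le_mul_of_nonneg_right h1 h3
        _ = (⌈s * 2 ^ m / T⌉₊ : ℝ) * T / 2 ^ m := by ring
    have huT : ∀ m, u m ≤ s + T / 2 ^ m := by
      intro m
      have h1 : (⌈s * 2 ^ m / T⌉₊ : ℝ) ≤ s * 2 ^ m / T + 1 :=
        (Nat.ceil_lt_add_one (hx m)).le
      have h3 : (0:ℝ) < T / 2 ^ m := by positivity
      calc u m ≤ (s * 2 ^ m / T + 1) * T / 2 ^ m := by
            rw [hu]
            apply div_le_div_of_nonneg_right _ (by positivity)
            exact mul_le_mul_of_nonneg_right h1 hT.le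
        _ = s + T / 2 ^ m := by field_simp
    have hk : ∀ m, ⌈s * 2 ^ m / T⌉₊ ≤ 2 ^ m := by
      intro m
      rw [Nat.ceil_le]
      rw [div_le_iff₀ hT]
      push_cast
      nlinarith [hs.2, (by positivity : (0:ℝ) < (2:ℝ)^m)]
    have hub : ∀ m, Y (u m) ≤ b := fun m => hb m _ (hk m)
    have hlim : Tendsto u atTop (nhdsWithin s (Ici s)) := by
      rw [tendsto_nhdsWithin_iff]
      constructor
      · have hupper : Tendsto (fun m : ℕ => s + T / 2 ^ m) atTop (nhds (s + 0)) := by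
          apply tendsto_const_nhds.add
          have : (fun m : ℕ => T / 2 ^ m) = fun m : ℕ => T * ((2:ℝ)⁻¹) ^ m := by
            funext m; rw [inv_pow]; ring
          rw [this]
          simpa using (tendsto_pow_atTop_nhds_zero_of_lt_one (by norm_num) (by norm_num)
            : Tendsto (fun m : ℕ => ((2:ℝ)⁻¹) ^ m) atTop (nhds 0)).const_mul T
        rw [add_zero] at hupper
        exact tendsto_of_tendsto_of_tendsto_of_le_of_le tendsto_const_nhds hupper hsu huT
      · exact Eventually.of_forall fun m => hsu m
    exact le_of_tendsto ((hrc s).tendsto.comp hlim) (Eventually.of_forall hub)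
theorem running_sup_beta_moment_le
    {Ω : Type*} {m0 : MeasurableSpace Ω} (μ : Measure Ω) [IsProbabilityMeasure μ]
    (ℱ : Filtration ℝ m0) (T : ℝ) (hT : 0 < T)
    (X : ℝ → Ω → ℝ) (hadapted : Adapted ℱ X)
    (hXpos : ∀ t ω, 0 ≤ X t ω)
    (hrc : ∀ ω t, ContinuousWithinAt (fun s => X s ω) (Ici t) t)
    (hll : ∀ ω t, ∃ l : ℝ, Tendsto (fun s => X s ω) (nhdsWithin t (Iio t)) (nhds l))
    (β : ℝ) (hβ : β ∈ Ioo (0 : ℝ) 1)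
    (c : ℝ)
    (hint : ∀ τ : Ω → ℝ, IsStoppingTime ℱ (fun ω => (τ ω : WithTop ℝ)) → (∀ ω, τ ω ∈ Icc 0 T) →
      Integrable (fun ω => X (τ ω) ω) μ)
    (hc : ∀ τ : Ω → ℝ, IsStoppingTime ℱ (fun ω => (τ ω : WithTop ℝ)) → (∀ ω, τ ω ∈ Icc 0 T) →
      ∫ ω, X (τ ω) ω ∂μ ≤ c) :
    ∫ ω, (⨆ s : Icc (0 : ℝ) T, X s ω) ^ β ∂μ ≤ (1 - β)⁻¹ * c ^ β := by
  classical
  obtain ⟨hβ0, hβ1⟩ := hβ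
  -- c is nonnegative
  have hc0 : 0 ≤ c := by
    have hst : IsStoppingTime ℱ (fun _ : Ω => (((0:ℝ) : WithTop ℝ))) := isStoppingTime_const ℱ 0
    have hmem : ∀ ω : Ω, (fun _ : Ω => (0:ℝ)) ω ∈ Icc (0:ℝ) T := fun ω => ⟨le_refl _, hT.le⟩
    refine le_trans ?_ (hc _ hst hmem)
    exact integral_nonneg fun ω => hXpos 0 ω
  set F : Ω → ℝ≥0∞ := fun ω => ⨆ n : ℕ, ⨆ k : Fin (2 ^ n + 1),
    ENNReal.ofReal (X ((k : ℝ) * T / 2 ^ n) ω) with hF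
  have hXmeas : ∀ s : ℝ, Measurable (X s) := fun s =>
    (hadapted s).mono (ℱ.le s) le_rfl
  have hFmeas : Measurable F := by
    apply Measurable.iSup; intro n; apply Measurable.iSup; intro k
    exact (hXmeas _).ennreal_ofReal
  have hgridF : ∀ (ω : Ω) (n k : ℕ), k ≤ 2 ^ n →
      ENNReal.ofReal (X ((k : ℝ) * T / 2 ^ n) ω) ≤ F ω := by
    intro ω n k hk
    have h1 : ENNReal.ofReal (X ((k : ℝ) * T / 2 ^ n) ω) ≤
        ⨆ j : Fin (2 ^ n + 1), ENNReal.ofReal (X ((j : ℝ) * T / 2 ^ n) ω) := by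
      have := le_iSup (fun j : Fin (2 ^ n + 1) =>
        ENNReal.ofReal (X ((j : ℝ) * T / 2 ^ n) ω)) ⟨k, by omega⟩
      simpa using this
    exact h1.trans (le_iSup (fun n => ⨆ j : Fin (2 ^ n + 1),
      ENNReal.ofReal (X ((j : ℝ) * T / 2 ^ n) ω)) n)
  -- the running supremum equals the (toReal of the) countable grid supremum
  haveI hne : Nonempty (Icc (0 : ℝ) T) := Set.Nonempty.to_subtype (nonempty_Icc.2 hT.le)
  have hM : ∀ ω : Ω, (⨆ s : Icc (0 : ℝ) T, X s ω) = (F ω).toReal := by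
    intro ω
    by_cases hFtop : F ω = ∞
    · rw [hFtop, ENNReal.toReal_top]
      apply Real.iSup_of_not_bddAbove
      rintro ⟨b, hb⟩
      have hgb : ∀ n k : ℕ, k ≤ 2 ^ n → X ((k : ℝ) * T / 2 ^ n) ω ≤ b := by
        intro n k hk
        exact hb ⟨⟨_, grid_mem_Icc hT n k hk⟩, rfl⟩
      have : F ω ≤ ENNReal.ofReal b := by
        rw [hF]
        refine iSup_le fun n => iSup_le fun k => ?_
        exact ENNReal.ofReal_le_ofReal (hgb n k (by omega))
      rw [hFtop] at this
      exact (ENNReal.ofReal_lt_top.not_ge this).elim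
    · set b := (F ω).toReal with hb
      have hgb : ∀ n k : ℕ, k ≤ 2 ^ n → X ((k : ℝ) * T / 2 ^ n) ω ≤ b := by
        intro n k hk
        have h1 := hgridF ω n k hk
        have := ENNReal.toReal_mono hFtop h1
        rwa [ENNReal.toReal_ofReal (hXpos _ ω)] at this
      have hub : ∀ s ∈ Icc (0 : ℝ) T, X s ω ≤ b :=
        grid_bound hT (fun s => X s ω) (hrc ω) hgb
      have hbdd : BddAbove (range fun s : Icc (0 : ℝ) T => X s ω) := by
        refine ⟨b, ?_⟩
        rintro _ ⟨s, rfl⟩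
        exact hub s s.2
      have hle : (⨆ s : Icc (0 : ℝ) T, X s ω) ≤ b :=
        ciSup_le fun s => hub s s.2
      have hM0 : 0 ≤ ⨆ s : Icc (0 : ℝ) T, X s ω :=
        le_trans (hXpos 0 ω) (le_ciSup hbdd ⟨0, ⟨le_refl _, hT.le⟩⟩)
      have hge : b ≤ ⨆ s : Icc (0 : ℝ) T, X s ω := by
        have h1 : F ω ≤ ENNReal.ofReal (⨆ s : Icc (0 : ℝ) T, X s ω) := by
          rw [hF]
          refine iSup_le fun n => iSup_le fun k => ENNReal.ofReal_le_ofReal ?_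
          exact le_ciSup hbdd ⟨_, grid_mem_Icc hT n k (by omega)⟩
        have := ENNReal.toReal_mono ENNReal.ofReal_ne_top h1
        rwa [ENNReal.toReal_ofReal hM0] at this
      exact le_antisymm hle hge
  -- maximal inequality
  have hmax : ∀ t : ℝ, 0 < t → μ {ω | t < (F ω).toReal} ≤ ENNReal.ofReal (c / t) := by
    intro t ht
    set B : ℕ → Set Ω := fun n => {ω | ∃ k : ℕ, k ≤ 2 ^ n ∧ t < X ((k : ℝ) * T / 2 ^ n) ω}
      with hBdef
    have hBmeas : ∀ n, MeasurableSet (B n) := by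
      intro n
      have : B n = ⋃ (k : ℕ) (_ : k ≤ 2 ^ n), {ω | t < X ((k : ℝ) * T / 2 ^ n) ω} := by
        ext ω; simp [hBdef]
      rw [this]
      exact MeasurableSet.iUnion fun k => MeasurableSet.iUnion fun _ =>
        measurableSet_lt measurable_const (hXmeas _)
    have hBmono : Monotone B := by
      apply monotone_nat_of_le_succ
      intro n ω hω
      obtain ⟨k, hk, hkt⟩ := hω
      refine ⟨2 * k, by omega, ?_⟩
      have heq : ((2 * k : ℕ) : ℝ) * T / 2 ^ (n + 1) = (k : ℝ) * T / 2 ^ n := by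
        push_cast; ring
      rwa [heq]
    have hsub : {ω | t < (F ω).toReal} ⊆ ⋃ n, B n := by
      intro ω hω
      simp only [mem_setOf_eq] at hω
      have hFtop : F ω ≠ ∞ := by
        intro h
        rw [h, ENNReal.toReal_top] at hω
        exact absurd hω (not_lt.2 ht.le)
      have h1 : ENNReal.ofReal t < F ω :=
        (ENNReal.ofReal_lt_iff_lt_toReal ht.le hFtop).2 hω
      rw [hF] at h1
      obtain ⟨n, hn⟩ := lt_iSup_iff.1 h1
      obtain ⟨k, hk⟩ := lt_iSup_iff.1 hn
      have h2 : t < X ((k : ℝ) * T / 2 ^ n) ω :=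
        (ENNReal.ofReal_lt_ofReal_iff_of_nonneg ht.le).1 hk
      exact mem_iUnion.2 ⟨n, ⟨k, by omega, h2⟩⟩
    have hB : ∀ n, μ (B n) ≤ ENNReal.ofReal (c / t) := by
      intro n
      set P : Ω → ℕ → Prop := fun ω k => k ≤ 2 ^ n ∧ t < X ((k : ℝ) * T / 2 ^ n) ω with hP
      set τ : Ω → ℝ := fun ω => if h : ∃ k, P ω k then ((Nat.find h : ℝ) * T / 2 ^ n) else T
        with hτ
      have hPfind : ∀ (ω : Ω) (h : ∃ k, P ω k), Nat.find h ≤ 2 ^ n :=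
        fun ω h => (Nat.find_spec h).1
      have hτmem : ∀ ω, τ ω ∈ Icc (0 : ℝ) T := by
        intro ω
        rw [hτ]
        dsimp only
        split_ifs with h
        · exact grid_mem_Icc hT n _ (hPfind ω h)
        · exact ⟨hT.le, le_refl T⟩
      have hst : IsStoppingTime ℱ (fun ω => (τ ω : WithTop ℝ)) := by
        intro r
        simp only [WithTop.coe_le_coe]
        by_cases hTr : T ≤ r
        · have : {ω | τ ω ≤ r} = univ := eq_univ_of_forall fun ω => le_trans (hτmem ω).2 hTr
          rw [this]
          exact MeasurableSet.univ
        · push_neg at hTr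
          have hset : {ω | τ ω ≤ r} = ⋃ (k : ℕ) (_ : k ≤ 2 ^ n ∧ (k : ℝ) * T / 2 ^ n ≤ r),
              ({ω | P ω k} ∩ ⋂ (j : ℕ) (_ : j < k), {ω | P ω j}ᶜ) := by
            ext ω
            simp only [mem_setOf_eq, mem_iUnion, mem_inter_iff, mem_iInter, mem_compl_iff]
            constructor
            · intro hτr
              by_cases h : ∃ k, P ω k
              · have hτval : τ ω = ((Nat.find h : ℝ) * T / 2 ^ n) := dif_pos h
                refine ⟨Nat.find h, ⟨hPfind ω h, ?_⟩, Nat.find_spec h,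
                  fun j hj => Nat.find_min h hj⟩
                rw [hτval] at hτr
                exact hτr
              · have hτval : τ ω = T := dif_neg h
                rw [hτval] at hτr
                exact absurd hτr (not_le.2 hTr)
            · rintro ⟨k, ⟨hk, hkr⟩, hPk, hmin⟩
              have h : ∃ j, P ω j := ⟨k, hPk⟩
              have hfind : Nat.find h = k := by
                refine le_antisymm (Nat.find_min' h hPk) ?_
                by_contra hlt
                push_neg at hlt
                exact hmin _ hlt (Nat.find_spec h)
              have hτval : τ ω = ((Nat.find h : ℝ) * T / 2 ^ n) := dif_pos h
              rw [hτval, hfind]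
              exact hkr
          rw [hset]
          refine MeasurableSet.iUnion fun k => MeasurableSet.iUnion fun hk => ?_
          have hmeasP : ∀ j : ℕ, (j : ℝ) * T / 2 ^ n ≤ r → MeasurableSet[ℱ r] {ω | P ω j} := by
            intro j hjr
            by_cases hj2 : j ≤ 2 ^ n
            · have : {ω | P ω j} = {ω | t < X ((j : ℝ) * T / 2 ^ n) ω} := by
                ext ω; simp [hP, hj2]
              rw [this]
              have hXr : Measurable[ℱ r] (X ((j : ℝ) * T / 2 ^ n)) :=
                (hadapted _).mono (ℱ.mono hjr) le_rfl
              exact hXr measurableSet_Ioi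
            · have : {ω | P ω j} = ∅ := by ext ω; simp [hP, hj2]
              rw [this]
              exact @MeasurableSet.empty _ (ℱ r)
          have hjler : ∀ j : ℕ, j ≤ k → (j : ℝ) * T / 2 ^ n ≤ r := by
            intro j hj
            refine le_trans ?_ hk.2
            apply div_le_div_of_nonneg_right _ (by positivity)
            have : (j : ℝ) ≤ (k : ℝ) := by exact_mod_cast hj
            nlinarith
          exact (hmeasP k (hjler k le_rfl)).inter
            (MeasurableSet.iInter fun j => MeasurableSet.iInter fun hj =>
              (hmeasP j (hjler j hj.le)).compl)
      have hτint := hint τ hst hτmem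
      have hXτ : ∀ ω ∈ B n, t ≤ X (τ ω) ω := by
        intro ω hω
        have h : ∃ k, P ω k := hω
        have hτval : τ ω = ((Nat.find h : ℝ) * T / 2 ^ n) := dif_pos h
        rw [hτval]
        exact (Nat.find_spec h).2.le
      have step : t * (μ (B n)).toReal ≤ c := by
        have h1 : t * (μ (B n)).toReal ≤ ∫ ω in B n, X (τ ω) ω ∂μ := by
          have h := setIntegral_ge_of_const_le_real (hBmeas n) (measure_ne_top μ _) hXτ
            hτint.integrableOn
          exact h
        have h2 : ∫ ω in B n, X (τ ω) ω ∂μ ≤ ∫ ω, X (τ ω) ω ∂μ :=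
          setIntegral_le_integral hτint (ae_of_all _ fun ω => hXpos _ ω)
        have h3 := hc τ hst hτmem
        linarith
      have h5 : (μ (B n)).toReal ≤ c / t := by
        rw [le_div_iff₀ ht]
        linarith
      exact (ENNReal.le_ofReal_iff_toReal_le (measure_ne_top μ _)
        (div_nonneg hc0 ht.le)).2 h5
    calc μ {ω | t < (F ω).toReal} ≤ μ (⋃ n, B n) := measure_mono hsub
      _ = ⨆ n, μ (B n) := hBmono.measure_iUnion
      _ ≤ ENNReal.ofReal (c / t) := iSup_le hB
  -- final computation
  have hβne : β ≠ 0 := ne_of_gt hβ0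
  have h1β : (0:ℝ) < 1 - β := by linarith
  simp_rw [hM]
  set f : Ω → ℝ := fun ω => (F ω).toReal with hfdef
  have hfm : Measurable f := hFmeas.ennreal_toReal
  have hfnn : ∀ ω, 0 ≤ f ω := fun ω => ENNReal.toReal_nonneg
  have hrpow_nn : ∀ ω, 0 ≤ f ω ^ β := fun ω => Real.rpow_nonneg (hfnn ω) β
  have hfm2 : Measurable fun ω => f ω ^ β :=
    (Real.continuous_rpow_const hβ0.le).measurable.comp hfm
  rw [integral_eq_lintegral_of_nonneg_ae (ae_of_all _ hrpow_nn) hfm2.aestronglyMeasurable]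
  have hRHS0 : 0 ≤ (1 - β)⁻¹ * c ^ β :=
    mul_nonneg (inv_nonneg.2 h1β.le) (Real.rpow_nonneg hc0 β)
  apply ENNReal.toReal_le_of_le_ofReal hRHS0
  rw [lintegral_rpow_eq_lintegral_meas_lt_mul μ (ae_of_all _ hfnn) hfm.aemeasurable hβ0]
  rcases eq_or_lt_of_le hc0 with hczero | hcpos
  · -- c = 0 : the tail measure vanishes
    have hz : ∫⁻ t in Ioi (0:ℝ), μ {a | t < f a} * ENNReal.ofReal (t ^ (β - 1)) = 0 := by
      apply le_antisymm _ zero_le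
      have hbd : ∀ t ∈ Ioi (0:ℝ),
          μ {a | t < f a} * ENNReal.ofReal (t ^ (β - 1)) ≤ (0 : ℝ≥0∞) := by
        intro t ht
        have h1 := hmax t ht
        rw [← hczero] at h1
        simp only [zero_div, ENNReal.ofReal_zero, nonpos_iff_eq_zero] at h1
        rw [h1, zero_mul]
      calc ∫⁻ t in Ioi (0:ℝ), μ {a | t < f a} * ENNReal.ofReal (t ^ (β - 1))
          ≤ ∫⁻ _ in Ioi (0:ℝ), (0:ℝ≥0∞) := setLIntegral_mono' measurableSet_Ioi hbd
        _ = 0 := by simp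
    rw [hz, mul_zero]
    exact zero_le
  · -- 0 < c : split at c
    have hsplit : (Ioi (0:ℝ)) = Ioc 0 c ∪ Ioi c := (Ioc_union_Ioi_eq_Ioi hcpos.le).symm
    rw [hsplit, lintegral_union measurableSet_Ioi Ioc_disjoint_Ioi_same]
    have hpart1 : ∫⁻ t in Ioc (0:ℝ) c, μ {a | t < f a} * ENNReal.ofReal (t ^ (β - 1))
        ≤ ENNReal.ofReal (c ^ β / β) := by
      have hintg : IntegrableOn (fun t : ℝ => t ^ (β - 1)) (Ioc 0 c) := by
        have := intervalIntegral.intervalIntegrable_rpow'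
          (show (-1:ℝ) < β - 1 by linarith) (a := 0) (b := c)
        rwa [intervalIntegrable_iff_integrableOn_Ioc_of_le hcpos.le] at this
      have hnn1 : 0 ≤ᵐ[volume.restrict (Ioc (0:ℝ) c)] fun t : ℝ => t ^ (β - 1) := by
        filter_upwards [ae_restrict_mem measurableSet_Ioc] with t ht
        exact Real.rpow_nonneg ht.1.le _
      calc ∫⁻ t in Ioc (0:ℝ) c, μ {a | t < f a} * ENNReal.ofReal (t ^ (β - 1))
          ≤ ∫⁻ t in Ioc (0:ℝ) c, ENNReal.ofReal (t ^ (β - 1)) := by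
            apply lintegral_mono
            intro t
            calc μ {a | t < f a} * ENNReal.ofReal (t ^ (β - 1))
                ≤ 1 * ENNReal.ofReal (t ^ (β - 1)) := mul_le_mul_left prob_le_one _
              _ = ENNReal.ofReal (t ^ (β - 1)) := one_mul _
        _ = ENNReal.ofReal (∫ t in Ioc (0:ℝ) c, t ^ (β - 1)) :=
            (ofReal_integral_eq_lintegral_ofReal hintg hnn1).symm
        _ = ENNReal.ofReal (c ^ β / β) := by
            congr 1
            rw [← intervalIntegral.integral_of_le hcpos.le,
              integral_rpow (Or.inl (show (-1:ℝ) < β - 1 by linarith))]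
            have hb : β - 1 + 1 = β := by ring
            rw [hb, Real.zero_rpow hβne]
            ring
    have hpart2 : ∫⁻ t in Ioi c, μ {a | t < f a} * ENNReal.ofReal (t ^ (β - 1))
        ≤ ENNReal.ofReal (c ^ β / (1 - β)) := by
      have hintg : IntegrableOn (fun t : ℝ => c * t ^ (β - 2)) (Ioi c) :=
        (integrableOn_Ioi_rpow_of_lt (show β - 2 < -1 by linarith) hcpos).const_mul c
      have hnn2 : 0 ≤ᵐ[volume.restrict (Ioi c)] fun t : ℝ => c * t ^ (β - 2) := by
        filter_upwards [ae_restrict_mem measurableSet_Ioi] with t ht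
        exact mul_nonneg hc0 (Real.rpow_nonneg (le_trans hcpos.le (le_of_lt ht)) _)
      calc ∫⁻ t in Ioi c, μ {a | t < f a} * ENNReal.ofReal (t ^ (β - 1))
          ≤ ∫⁻ t in Ioi c, ENNReal.ofReal (c * t ^ (β - 2)) := by
            apply setLIntegral_mono' measurableSet_Ioi
            intro t htc
            have ht0 : 0 < t := lt_trans hcpos htc
            calc μ {a | t < f a} * ENNReal.ofReal (t ^ (β - 1))
                ≤ ENNReal.ofReal (c / t) * ENNReal.ofReal (t ^ (β - 1)) :=
                  mul_le_mul_left (hmax t ht0) _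
              _ = ENNReal.ofReal (c / t * t ^ (β - 1)) :=
                  (ENNReal.ofReal_mul (div_nonneg hc0 ht0.le)).symm
              _ = ENNReal.ofReal (c * t ^ (β - 2)) := by
                  congr 1
                  have h2 : t ^ (β - 2) = t ^ (β - 1) / t := by
                    have := Real.rpow_sub_one ht0.ne' (β - 1)
                    have hb : β - 1 - 1 = β - 2 := by ring
                    rw [hb] at this
                    exact this
                  rw [h2]
                  ring
        _ = ENNReal.ofReal (∫ t in Ioi c, c * t ^ (β - 2)) :=
            (ofReal_integral_eq_lintegral_ofReal hintg hnn2).symm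
        _ = ENNReal.ofReal (c ^ β / (1 - β)) := by
            congr 1
            rw [MeasureTheory.integral_const_mul,
              integral_Ioi_rpow_of_lt (show β - 2 < -1 by linarith) hcpos]
            have hb : β - 2 + 1 = β - 1 := by ring
            rw [hb]
            have hcb : c * c ^ (β - 1) = c ^ β := by
              rw [← Real.rpow_one_add' hcpos.le (by linarith : 1 + (β - 1) ≠ 0)]
              norm_num
            have hβ1' : β - 1 ≠ 0 := by linarith
            have h1β' : (1:ℝ) - β ≠ 0 := by linarith
            field_simp
            nlinarith [hcb]
    refine le_trans (mul_le_mul_right (add_le_add hpart1 hpart2) (ENNReal.ofReal β)) (le_of_eq ?_)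
    calc ENNReal.ofReal β * (ENNReal.ofReal (c ^ β / β) + ENNReal.ofReal (c ^ β / (1 - β)))
        = ENNReal.ofReal (β * (c ^ β / β + c ^ β / (1 - β))) := by
          rw [← ENNReal.ofReal_add (div_nonneg (Real.rpow_nonneg hc0 β) hβ0.le)
            (div_nonneg (Real.rpow_nonneg hc0 β) h1β.le),
            ← ENNReal.ofReal_mul hβ0.le]
      _ = ENNReal.ofReal ((1 - β)⁻¹ * c ^ β) := by
          congr 1
          field_simp
          ring
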